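/- Define m_{2n} = -((4n+1)/2) ∫_{-1}^{1} P_{2n}(t) |t|^β dt for real β > -1. Then m_{2n} = -(4n+1)·sqrt(π)·2^{-β-1} · ( Γ(1+β) / ( Γ(1+β/2) Γ(3/2+β/2) ) ) · ( ∏_{k=0}^{n-1} (β/2 - k) ) / ( ∏_{k=0}^{n-1} (β/2 + 3/2 + k) ). -/

import Mathlib

open Polynomial Real Finset

noncomputable def legendre (n : ℕ) : Polynomial ℝ :=
  Polynomial.C (1 / (2 ^ n * n.factorial : ℝ)) * derivative^[n] ((X ^ 2 - 1) ^ n)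

lemma iter_deriv_X_mul (f : Polynomial ℝ) : ∀ m : ℕ,
    derivative^[m+1] (X * f) = X * derivative^[m+1] f + C ((m:ℝ)+1) * derivative^[m] f := by
  intro m
  induction m with
  | zero => simp [derivative_mul]; ring
  | succ m ih =>
    rw [Function.iterate_succ_apply' (f := ⇑derivative) (n := m+1), ih, derivative_add,
      derivative_mul, derivative_mul, derivative_X, derivative_C,
      ← Function.iterate_succ_apply' (f := ⇑derivative) (n := m+1),
      ← Function.iterate_succ_apply' (f := ⇑derivative) (n := m)]
    push_cast
    simp only [C_add, C_1]
    ring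

lemma legendre_deriv_succ (n : ℕ) :
    derivative (legendre (n+1)) = X * derivative (legendre n) + C ((n:ℝ)+1) * legendre n := by
  have hQ : derivative ((X^2 - 1 : Polynomial ℝ)^(n+1)) = C (2*((n:ℝ)+1)) * (X * (X^2-1)^n) := by
    rw [derivative_pow]
    simp only [derivative_sub, derivative_one, derivative_X_pow, C_add, C_mul, C_1, map_ofNat]
    push_cast
    simp only [C_add, C_mul, C_1, map_ofNat]
    ring
  have key : derivative^[n+2] ((X^2 - 1 : Polynomial ℝ)^(n+1))
      = C (2*((n:ℝ)+1)) * (X * derivative^[n+1] ((X^2-1)^n)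
          + C ((n:ℝ)+1) * derivative^[n] ((X^2-1)^n)) := by
    have : derivative^[n+2] ((X^2 - 1 : Polynomial ℝ)^(n+1))
        = derivative^[n+1] (derivative ((X^2-1)^(n+1))) := by
      rw [← Function.iterate_succ_apply]
    rw [this, hQ, iterate_derivative_C_mul, iter_deriv_X_mul]
  have h1 : (1 / (2 ^ (n+1) * (n+1).factorial : ℝ)) * (2*((n:ℝ)+1)) = 1 / (2^n * n.factorial) := by
    rw [Nat.factorial_succ]
    push_cast
    have := n.factorial_pos
    have h2 : (n.factorial : ℝ) ≠ 0 := by positivity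
    field_simp
    ring
  unfold legendre
  rw [derivative_C_mul, derivative_C_mul,
    show derivative ((⇑derivative)^[n+1] ((X^2-1:Polynomial ℝ)^(n+1)))
      = derivative^[n+2] ((X^2-1:Polynomial ℝ)^(n+1)) from (Function.iterate_succ_apply' _ _ _).symm,
    key,
    show derivative ((⇑derivative)^[n] ((X^2-1:Polynomial ℝ)^n))
      = derivative^[n+1] ((X^2-1:Polynomial ℝ)^n) from (Function.iterate_succ_apply' _ _ _).symm,
    ← mul_assoc, ← C_mul, h1]
  ring

lemma legendre_eval_one (n : ℕ) : (legendre n).eval 1 = 1 := by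
  have hfac : ((X^2 - 1 : Polynomial ℝ))^n = (X - C 1)^n * (X + C 1)^n := by
    rw [← mul_pow]; simp only [C_1]; ring
  have h1 : eval 1 (derivative^[n] ((X^2-1 : Polynomial ℝ)^n)) = 2^n * n.factorial := by
    rw [hfac, iterate_derivative_mul, eval_finset_sum]
    rw [Finset.sum_eq_single 0]
    · simp only [Nat.choose_zero_right, one_smul, Nat.sub_zero,
        Function.iterate_zero_apply, iterate_derivative_X_sub_pow_self]
      simp
      ring
    · intro k hk hk0
      rw [Finset.mem_range] at hk
      have hkn : n - (n - k) = k := by omega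
      rw [iterate_derivative_X_sub_pow, hkn]
      simp [zero_pow hk0]
    · intro h; simp at h
  unfold legendre
  rw [eval_mul, eval_C, h1]
  have := n.factorial_pos
  have h2 : (n.factorial : ℝ) ≠ 0 := by positivity
  field_simp

lemma iter_comp_neg (n k : ℕ) : (derivative^[k] ((X^2-1 : Polynomial ℝ)^n)).comp (-X)
    = C ((-1:ℝ)^k) * derivative^[k] ((X^2-1)^n) := by
  induction k with
  | zero =>
    simp only [Function.iterate_zero_apply, pow_zero, C_1, one_mul, pow_comp, sub_comp,
      one_comp, pow_comp, X_comp]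
    ring_nf
  | succ k ih =>
    have h := congrArg derivative ih
    rw [derivative_comp, derivative_C_mul, derivative_neg, derivative_X] at h
    have h2 : (derivative (derivative^[k] ((X^2-1 : Polynomial ℝ)^n))).comp (-X)
        = - (C ((-1:ℝ)^k) * derivative (derivative^[k] ((X^2-1:Polynomial ℝ)^n))) := by
      linear_combination -h
    rw [Function.iterate_succ_apply', h2, pow_succ (-1:ℝ) k, C_mul, C_neg, C_1]
    ring

lemma legendre_eval_neg (n : ℕ) (t : ℝ) :
    (legendre (2*n)).eval (-t) = (legendre (2*n)).eval t := by
  have h : eval (-t) (legendre (2*n)) = eval t ((legendre (2*n)).comp (-X)) := by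
    rw [eval_comp]; simp
  rw [h]
  unfold legendre
  rw [mul_comp, C_comp, iter_comp_neg]
  simp [pow_mul]

open MeasureTheory intervalIntegral in
lemma intInt (p : Polynomial ℝ) {l : ℝ} (hl : -1 < l) :
    IntervalIntegrable (fun x => x ^ l * p.eval x) volume 0 1 :=
  (intervalIntegral.intervalIntegrable_rpow' hl).mul_continuousOn
    (p.continuous).continuousOn

open MeasureTheory intervalIntegral in
lemma key_ftc (p : Polynomial ℝ) {l : ℝ} (hl : -1 < l) :
    (l+1) * (∫ x in (0:ℝ)..1, x ^ l * p.eval x)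
      + ∫ x in (0:ℝ)..1, x ^ (l+1) * (derivative p).eval x = p.eval 1 := by
  have hl1 : (0:ℝ) < l + 1 := by linarith
  set g : ℝ → ℝ := fun x => (l+1) * (x ^ l * p.eval x) + x ^ (l+1) * (derivative p).eval x with hg
  have hint1 := intInt p hl
  have hint2 := intInt (derivative p) (by linarith : (-1:ℝ) < l+1)
  have hintg : IntervalIntegrable g volume 0 1 := (hint1.const_mul (l+1)).add hint2
  have hcont : ContinuousOn (fun x : ℝ => x ^ (l+1) * p.eval x) (Set.Icc 0 1) := by
    apply ContinuousOn.mul _ p.continuous.continuousOn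
    intro x _
    exact (Real.continuousAt_rpow_const x (l+1) (Or.inr hl1.le)).continuousWithinAt
  have hderiv : ∀ x ∈ Set.Ioo (0:ℝ) 1,
      HasDerivAt (fun x : ℝ => x ^ (l+1) * p.eval x) (g x) x := by
    intro x hx
    have h1 : HasDerivAt (fun x : ℝ => x ^ (l+1)) ((l+1) * x ^ l) x := by
      have := Real.hasDerivAt_rpow_const (x := x) (p := l+1) (Or.inl hx.1.ne')
      simpa using this
    have := h1.mul (p.hasDerivAt x)
    refine this.congr_deriv ?_
    simp only [hg]; ring
  have := integral_eq_sub_of_hasDerivAt_of_le (by norm_num) hcont hderiv hintg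
  rw [hg] at this
  rw [integral_add (hint1.const_mul (l+1)) hint2, intervalIntegral.integral_const_mul] at this
  rw [this]
  rw [Real.one_rpow, Real.zero_rpow hl1.ne']
  ring

open MeasureTheory intervalIntegral in
lemma rec_step (n : ℕ) {l : ℝ} (hl : -1 < l) :
    (l+1) * ∫ x in (0:ℝ)..1, x ^ l * (legendre (n+1)).eval x
      = (l+1-n) * ∫ x in (0:ℝ)..1, x ^ (l+1) * (legendre n).eval x := by
  have hl1 : (-1:ℝ) < l + 1 := by linarith
  have hl2 : (-1:ℝ) < l + 2 := by linarith
  have hA : IntervalIntegrable (fun x : ℝ => x ^ (l+2) * (derivative (legendre n)).eval x)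
      volume 0 1 := intInt _ hl2
  have hB : IntervalIntegrable (fun x : ℝ => ((n:ℝ)+1) * (x ^ (l+1) * (legendre n).eval x))
      volume 0 1 := (intInt _ hl1).const_mul _
  have e1 : (∫ x in (0:ℝ)..1, x ^ (l+1) * (derivative (legendre (n+1))).eval x)
      = (∫ x in (0:ℝ)..1, x ^ (l+2) * (derivative (legendre n)).eval x)
        + ((n:ℝ)+1) * ∫ x in (0:ℝ)..1, x ^ (l+1) * (legendre n).eval x := by
    rw [← intervalIntegral.integral_const_mul, ← integral_add hA hB]
    apply integral_congr
    intro x hx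
    rw [Set.uIcc_of_le (by norm_num : (0:ℝ) ≤ 1)] at hx
    rw [legendre_deriv_succ]
    simp only [eval_add, eval_mul, eval_C, eval_X]
    by_cases hx0 : x = 0
    · subst hx0
      rw [Real.zero_rpow (by linarith : l + 1 ≠ 0), Real.zero_rpow (by linarith : l + 2 ≠ 0)]
      ring
    · have : x ^ (l+2) = x ^ (l+1) * x := by
        rw [show l + 2 = (l+1) + 1 by ring, Real.rpow_add_one hx0]
      rw [this]; ring
  have k1 := key_ftc (legendre (n+1)) hl
  have k2 := key_ftc (legendre n) hl1
  rw [legendre_eval_one] at k1 k2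
  rw [e1] at k1
  rw [show l + 1 + 1 = l + 2 by ring] at k2
  linear_combination k1 - k2

lemma closed_form (n : ℕ) : ∀ l : ℝ, -1 < l →
    (∫ x in (0:ℝ)..1, x ^ l * (legendre (2*n)).eval x) * ∏ k ∈ range (n+1), (l + 2*k + 1)
      = ∏ k ∈ range n, (l - 2*k) := by
  induction n with
  | zero =>
    intro l hl
    have h0 : legendre (2*0) = 1 := by
      unfold legendre; simp
    have hne : l + 1 ≠ 0 := by linarith
    rw [h0]
    simp only [eval_one, mul_one, prod_range_one, prod_range_zero, Nat.cast_zero]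
    rw [integral_rpow (Or.inl hl), Real.one_rpow, Real.zero_rpow hne]
    field_simp
    simp
  | succ n ih =>
    intro l hl
    have hl1 : (-1:ℝ) < l + 1 := by linarith
    have hl2 : (-1:ℝ) < l + 2 := by linarith
    have r1 := rec_step (2*n+1) hl
    have r2 := rec_step (2*n) hl1
    have ihl := ih (l+2) hl2
    rw [show 2*n+1+1 = 2*(n+1) by ring] at r1
    rw [show (2*n : ℕ) + 1 = 2*n+1 by ring] at r2
    rw [show ((2*n+1 : ℕ) : ℝ) = 2*n+1 by push_cast; ring] at r1
    rw [show ((2*n : ℕ) : ℝ) = 2*n by push_cast; ring] at r2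
    rw [show l + 1 + 1 = l + 2 by ring] at r2
    set A := ∫ x in (0:ℝ)..1, x ^ l * (legendre (2*(n+1))).eval x with hA
    set M := ∫ x in (0:ℝ)..1, x ^ (l+1) * (legendre (2*n+1)).eval x with hM
    set B := ∫ x in (0:ℝ)..1, x ^ (l+2) * (legendre (2*n)).eval x with hB
    -- key : (l+1)(l+2) A = (l-2n)(l+2-2n) B
    have key : (l+1)*(l+2)*A = (l+1-(2*n+1))*(l+2-2*n)*B := by
      linear_combination (l+2)*r1 + (l+1-(2*n+1))*r2
    set P3 := ∏ k ∈ range (n+1), (l + 2*k + 3) with hP3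
    have h1 : ∏ k ∈ range (n+1+1), (l + 2*k + 1) = P3 * (l+1) := by
      rw [prod_range_succ', hP3]
      congr 1
      · apply Finset.prod_congr rfl
        intro k _
        push_cast
        ring
      · norm_num
    have hP3' : ∏ k ∈ range (n+1), ((l+2) + 2*k + 1) = P3 := by
      apply Finset.prod_congr rfl
      intro k _
      ring
    rw [hP3'] at ihl
    set Q0 := ∏ k ∈ range n, (l - 2*k) with hQ0
    set R := ∏ k ∈ range n, ((l+2) - 2*k) with hR
    have h3 : ∏ k ∈ range (n+1), (l - 2*k) = Q0 * (l - 2*n) := by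
      rw [prod_range_succ]
    have h4 : R * ((l+2) - 2*n) = Q0 * (l+2) := by
      have e1 : ∏ k ∈ range (n+1), ((l+2) - 2*k) = R * ((l+2) - 2*n) := by
        rw [prod_range_succ]
      have e2 : ∏ k ∈ range (n+1), ((l+2) - 2*k) = Q0 * (l+2) := by
        rw [prod_range_succ', hQ0]
        congr 1
        · apply Finset.prod_congr rfl
          intro k _
          push_cast
          ring
        · norm_num
      rw [← e1, e2]
    rw [h1, h3]
    apply mul_left_cancel₀ (show (l+1)*(l+2) ≠ 0 by
      have : (0:ℝ) < l+1 := by linarith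
      have : (0:ℝ) < l+2 := by linarith
      positivity)
    linear_combination P3 * (l+1) * key
      + (l+1-(2*n+1))*(l+2-2*n)*(l+1)*ihl
      + (l+1-(2*n+1))*(l+1)*h4

open MeasureTheory intervalIntegral in
lemma fold (n : ℕ) {β : ℝ} (hβ : -1 < β) :
    (∫ t in (-1:ℝ)..1, (legendre (2*n)).eval t * |t| ^ β)
      = 2 * ∫ x in (0:ℝ)..1, x ^ β * (legendre (2*n)).eval x := by
  set f : ℝ → ℝ := fun t => (legendre (2*n)).eval t * |t| ^ β with hf
  have heven : ∀ x, f (-x) = f x := by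
    intro x; simp only [hf, abs_neg, legendre_eval_neg]
  have hI1 : IntervalIntegrable f volume 0 1 := by
    refine (intInt (legendre (2*n)) hβ).congr_ae ?_
    have huIoc : Set.uIoc (0:ℝ) 1 = Set.Ioc 0 1 := Set.uIoc_of_le (by norm_num)
    rw [huIoc]
    refine (ae_restrict_iff' measurableSet_Ioc).2 (Filter.Eventually.of_forall fun x hx => ?_)
    simp only [hf, abs_of_pos hx.1]
    ring
  have hI2 : IntervalIntegrable f volume (-1) 0 := by
    have h2 : IntervalIntegrable (fun x => f (-x)) volume 1 0 := by
      simp only [heven]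
      exact hI1.symm
    have := (IntervalIntegrable.iff_comp_neg (f := f) (a := (-1:ℝ)) (b := (0:ℝ))).2
    simp only [neg_neg, neg_zero] at this
    exact this h2
  have hsplit := integral_add_adjacent_intervals hI2 hI1
  have hneg : (∫ t in (-1:ℝ)..0, f t) = ∫ t in (0:ℝ)..1, f t := by
    have h := integral_comp_neg (a := (0:ℝ)) (b := 1) (f := f)
    simp only [heven, neg_zero, neg_one_mul] at h
    rw [← h]
  have hcong : (∫ t in (0:ℝ)..1, f t) = ∫ x in (0:ℝ)..1, x ^ β * (legendre (2*n)).eval x := by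
    apply integral_congr
    intro x hx
    rw [Set.uIcc_of_le (by norm_num : (0:ℝ) ≤ 1)] at hx
    simp only [hf, abs_of_nonneg hx.1]
    ring
  calc (∫ t in (-1:ℝ)..1, f t) = (∫ t in (-1:ℝ)..0, f t) + ∫ t in (0:ℝ)..1, f t := hsplit.symm
    _ = 2 * ∫ x in (0:ℝ)..1, x ^ β * (legendre (2*n)).eval x := by
        rw [hneg, hcong]; ring

lemma gamma_eq {β : ℝ} (hβ : -1 < β) :
    Real.sqrt π * (2:ℝ) ^ (-β - 1)
      * (Real.Gamma (1+β) / (Real.Gamma (1+β/2) * Real.Gamma (3/2+β/2))) = 1/(β+1) := by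
  have hb1 : (0:ℝ) < β + 1 := by linarith
  have hdup := Real.Gamma_mul_Gamma_add_half ((β+1)/2)
  rw [show (β+1)/2 + 1/2 = 1 + β/2 by ring, show 2*((β+1)/2) = β + 1 by ring,
    show 1 - (β+1) = -β by ring] at hdup
  have h32 : Real.Gamma (3/2+β/2) = (β+1)/2 * Real.Gamma ((β+1)/2) := by
    have := Real.Gamma_add_one (show (β+1)/2 ≠ 0 by positivity)
    rw [show (β+1)/2 + 1 = 3/2 + β/2 by ring] at this
    rw [this]
  have hG1 : 0 < Real.Gamma ((β+1)/2) := Real.Gamma_pos_of_pos (by positivity)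
  have hG2 : 0 < Real.Gamma (1+β/2) := Real.Gamma_pos_of_pos (by linarith)
  have hG3 : 0 < Real.Gamma (β+1) := Real.Gamma_pos_of_pos hb1
  have hsq : (0:ℝ) < Real.sqrt π := Real.sqrt_pos.2 Real.pi_pos
  have hrp : (2:ℝ) ^ (-β-1) = (2:ℝ)^(-β) / 2 := by
    rw [show -β - 1 = -β - 1 by ring, Real.rpow_sub (by norm_num : (0:ℝ) < 2), Real.rpow_one]
  have hrpos : (0:ℝ) < (2:ℝ)^(-β) := Real.rpow_pos_of_pos (by norm_num) _
  have hD : Real.Gamma (1+β/2) * ((β+1)/2 * Real.Gamma ((β+1)/2))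
      = (β+1)/2 * (Real.Gamma (β+1) * (2:ℝ)^(-β) * Real.sqrt π) := by
    rw [← hdup]; ring
  rw [show (1:ℝ) + β = β + 1 by ring, h32, hrp, hD]
  field_simp

/-- The Legendre coefficients of `|t|^β`:
`m_{2n} = -((4n+1)/2) ∫_{-1}^1 P_{2n}(t) |t|^β dt`
`      = -(4n+1) √π 2^{-β-1} (Γ(1+β)/(Γ(1+β/2)Γ(3/2+β/2))) ∏(β/2-k)/∏(β/2+3/2+k)`. -/
theorem legendre_coeff_abs_rpow (n : ℕ) (β : ℝ) (hβ : -1 < β) :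
    -(((4 * n + 1 : ℝ)) / 2) * ∫ t in (-1 : ℝ)..1, (legendre (2 * n)).eval t * |t| ^ β
      = -(4 * n + 1 : ℝ) * Real.sqrt π * (2 : ℝ) ^ (-β - 1) *
        (Real.Gamma (1 + β) / (Real.Gamma (1 + β / 2) * Real.Gamma (3 / 2 + β / 2))) *
        (∏ k ∈ Finset.range n, (β / 2 - k)) / (∏ k ∈ Finset.range n, (β / 2 + 3 / 2 + k)) := by
  rw [fold n hβ]
  have hb1 : (0:ℝ) < β + 1 := by linarith
  have hc := closed_form n β hβ
  have hP2pos : (0:ℝ) < ∏ k ∈ range (n+1), (β + 2*k + 1) := by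
    apply Finset.prod_pos
    intro k _
    have : (0:ℝ) ≤ k := Nat.cast_nonneg k
    linarith
  have hI : (∫ x in (0:ℝ)..1, x ^ β * (legendre (2*n)).eval x)
      = (∏ k ∈ range n, (β - 2*k)) / ∏ k ∈ range (n+1), (β + 2*k + 1) :=
    (eq_div_iff hP2pos.ne').mpr hc
  have h1 : (∏ k ∈ range n, (β - 2*k)) = 2^n * ∏ k ∈ range n, (β/2 - k) := by
    have e : ∀ k ∈ range n, β - 2*(k:ℝ) = 2 * (β/2 - k) := fun k _ => by ring
    rw [Finset.prod_congr rfl e, Finset.prod_mul_distrib, Finset.prod_const, Finset.card_range]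
  have h2 : (∏ k ∈ range (n+1), (β + 2*k + 1))
      = (β+1) * (2^n * ∏ k ∈ range n, (β/2 + 3/2 + k)) := by
    rw [prod_range_succ']
    have e : ∀ k ∈ range n, β + 2*((k+1:ℕ):ℝ) + 1 = 2 * (β/2 + 3/2 + k) := fun k _ => by
      push_cast; ring
    rw [Finset.prod_congr rfl e, Finset.prod_mul_distrib, Finset.prod_const, Finset.card_range]
    push_cast
    ring
  have hQpos : (0:ℝ) < ∏ k ∈ range n, (β/2 + 3/2 + k) := by
    apply Finset.prod_pos
    intro k _
    have : (0:ℝ) ≤ k := Nat.cast_nonneg k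
    linarith
  have hs := gamma_eq hβ
  have hrhs : -(4 * (n:ℝ) + 1) * Real.sqrt π * (2 : ℝ) ^ (-β - 1) *
      (Real.Gamma (1 + β) / (Real.Gamma (1 + β / 2) * Real.Gamma (3 / 2 + β / 2)))
      = -(4 * (n:ℝ) + 1) * (1/(β+1)) := by
    rw [show -(4 * (n:ℝ) + 1) * Real.sqrt π * (2 : ℝ) ^ (-β - 1) *
        (Real.Gamma (1 + β) / (Real.Gamma (1 + β / 2) * Real.Gamma (3 / 2 + β / 2)))
        = -(4 * (n:ℝ) + 1) * (Real.sqrt π * (2 : ℝ) ^ (-β - 1) *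
          (Real.Gamma (1 + β) / (Real.Gamma (1 + β / 2) * Real.Gamma (3 / 2 + β / 2)))) by ring,
      hs]
  rw [hI, h1, h2, hrhs]
  have h2n : ((2:ℝ)^n) ≠ 0 := by positivity
  rw [show (β+1) * (2^n * ∏ k ∈ range n, (β/2 + 3/2 + k))
      = 2^n * ((β+1) * ∏ k ∈ range n, (β/2 + 3/2 + k)) by ring,
    mul_div_mul_left _ _ h2n]
  simp only [div_eq_mul_inv, mul_inv, one_div]
  ring
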